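/- arXiv:1505.03896 — 2 statements merged into one kernel-verified Lean document; each statement's English description precedes it below -/
import Mathlib

section
/- Let B be a ring, n a positive natural number, and Q a left B-module such that B, viewed as a left module over itself, is isomorphic to the direct sum of n copies of Q. Let E := End_B(Q)^op be the opposite ring of the endomorphism ring of Q. Then B and E are Morita equivalent: there is an equivalence between the category of left E-modules and the category of left B-modules. -/
open CategoryTheory

namespace SkryabinAux

open MulOpposite

universe u
variable {B Q : Type u} [Ring B] [AddCommGroup Q] [Module B Q] {n : ℕ}

/-- The `i`-th projection `B → Q` coming from `e`. -/
def pr (e : B ≃ₗ[B] (Fin n → Q)) (i : Fin n) : B →ₗ[B] Q :=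
  (LinearMap.proj i).comp e.toLinearMap

/-- The `i`-th inclusion `Q → B` coming from `e`. -/
def inc (e : B ≃ₗ[B] (Fin n → Q)) (i : Fin n) : Q →ₗ[B] B :=
  e.symm.toLinearMap.comp (LinearMap.single B (fun _ => Q) i)

lemma pr_inc (e : B ≃ₗ[B] (Fin n → Q)) (i j : Fin n) (q : Q) :
    pr e i (inc e j q) = if i = j then q else 0 := by
  simp [pr, inc, Pi.single_apply]

lemma sum_inc_pr (e : B ≃ₗ[B] (Fin n → Q)) (x : B) :
    ∑ i, inc e i (pr e i x) = x := by
  have h : ∑ i, inc e i (pr e i x) = e.symm (∑ i, Pi.single i (e x i)) := by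
    rw [map_sum]; rfl
  rw [h, Finset.univ_sum_single, e.symm_apply_apply]

/-- Right multiplication by `b` as a left-`B`-linear endomorphism of `B`. -/
def rmul (b : B) : B →ₗ[B] B where
  toFun x := x * b
  map_add' x y := add_mul x y b
  map_smul' c x := by simp [smul_eq_mul, mul_assoc]

@[simp] lemma rmul_apply (b x : B) : rmul b x = x * b := rfl

/-- The "(i,j) matrix entry" of right multiplication by `b`, as an endomorphism of `Q`. -/
def tau (e : B ≃ₗ[B] (Fin n → Q)) (b : B) (i j : Fin n) : Module.End B Q :=
  (pr e j) ∘ₗ (rmul b) ∘ₗ (inc e i)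

@[simp] lemma tau_apply (e : B ≃ₗ[B] (Fin n → Q)) (b : B) (i j : Fin n) (q : Q) :
    tau e b i j q = pr e j (inc e i q * b) := rfl

lemma tau_one (e : B ≃ₗ[B] (Fin n → Q)) (i j : Fin n) :
    tau e 1 i j = if j = i then 1 else 0 := by
  ext q
  simp only [tau_apply, mul_one, pr_inc]
  split <;> simp_all

lemma tau_add (e : B ≃ₗ[B] (Fin n → Q)) (b b' : B) (i j : Fin n) :
    tau e (b + b') i j = tau e b i j + tau e b' i j := by
  ext q; simp [mul_add]

lemma tau_mul (e : B ≃ₗ[B] (Fin n → Q)) (b b' : B) (i k : Fin n) :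
    tau e (b * b') i k = ∑ j, (tau e b' j k) * (tau e b i j) := by
  ext q
  have h : ∑ j, (tau e b' j k * tau e b i j) q
      = pr e k ((∑ j, inc e j (pr e j (inc e i q * b))) * b') := by
    rw [Finset.sum_mul, map_sum]
    simp [Module.End.mul_apply]
  simp only [LinearMap.sum_apply] at h ⊢
  rw [h, sum_inc_pr]
  simp [mul_assoc]

section FG

variable (e : B ≃ₗ[B] (Fin n → Q))

/-- Carrier of the functor `F : E-Mod → B-Mod`. -/
def FObj (_e : B ≃ₗ[B] (Fin n → Q)) (N : Type u) : Type u := Fin n → N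

variable (N : Type u) [AddCommGroup N] [Module (Module.End B Q)ᵐᵒᵖ N]

instance : AddCommGroup (FObj e N) := inferInstanceAs (AddCommGroup (Fin n → N))

instance : SMul B (FObj e N) :=
  ⟨fun b v i => ∑ j, op (tau e b i j) • v j⟩

lemma fsmul_def (b : B) (v : FObj e N) (i : Fin n) :
    (b • v) i = ∑ j, op (tau e b i j) • v j := rfl

instance : Module B (FObj e N) :=
  Module.ofMinimalAxioms
    (fun b v w => by
      funext i
      show ∑ j, op (tau e b i j) • (v j + w j) = (b • v) i + (b • w) i
      rw [fsmul_def, fsmul_def, ← Finset.sum_add_distrib]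
      exact Finset.sum_congr rfl fun j _ => smul_add _ _ _)
    (fun b b' v => by
      funext i
      show ∑ j, op (tau e (b + b') i j) • v j = (b • v) i + (b' • v) i
      rw [fsmul_def, fsmul_def, ← Finset.sum_add_distrib]
      refine Finset.sum_congr rfl fun j _ => ?_
      rw [tau_add, MulOpposite.op_add, add_smul])
    (fun b b' v => by
      funext i
      show ∑ k, op (tau e (b * b') i k) • v k = ∑ j, op (tau e b i j) • (b' • v) j
      have key : ∀ k, op (tau e (b * b') i k) • v k
          = ∑ j, (op (tau e b i j) * op (tau e b' j k)) • v k := by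
        intro k
        have h1 : (op (∑ j, tau e b' j k * tau e b i j) : (Module.End B Q)ᵐᵒᵖ)
            = ∑ j, op (tau e b' j k * tau e b i j) :=
          map_sum (opAddEquiv (α := Module.End B Q)) _ _
        rw [tau_mul, h1]
        simp only [op_mul]
        rw [Finset.sum_smul]
      simp only [key, fsmul_def, Finset.smul_sum, mul_smul]
      exact Finset.sum_comm)
    (fun v => by
      funext i
      show ∑ j, op (tau e (1:B) i j) • v j = v i
      rw [Finset.sum_eq_single i]
      · rw [tau_one]; simp
      · intro j _ hj
        rw [tau_one]; simp [hj]
      · simp)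

/-- Carrier of the functor `G : B-Mod → E-Mod`, namely `Hom_B(Q, M)`. -/
def GObj (B Q : Type u) [Ring B] [AddCommGroup Q] [Module B Q]
    (M : Type u) [AddCommGroup M] [Module B M] : Type u := Q →ₗ[B] M

variable (M : Type u) [AddCommGroup M] [Module B M]

/-- View an element of `GObj B Q M` as a linear map. -/
def GObj.lm (g : GObj B Q M) : Q →ₗ[B] M := g

instance : AddCommGroup (GObj B Q M) := inferInstanceAs (AddCommGroup (Q →ₗ[B] M))

instance : SMul (Module.End B Q)ᵐᵒᵖ (GObj B Q M) :=
  ⟨fun c g => (GObj.lm M g) ∘ₗ c.unop⟩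

lemma gsmul_def (c : (Module.End B Q)ᵐᵒᵖ) (g : GObj B Q M) (q : Q) :
    GObj.lm M (c • g) q = GObj.lm M g (c.unop q) := rfl

instance : Module (Module.End B Q)ᵐᵒᵖ (GObj B Q M) :=
  Module.ofMinimalAxioms
    (fun c g g' => by
      show (GObj.lm M g + GObj.lm M g') ∘ₗ c.unop = GObj.lm M g ∘ₗ c.unop + GObj.lm M g' ∘ₗ c.unop
      rw [LinearMap.add_comp])
    (fun c c' g => by
      show (GObj.lm M g) ∘ₗ (_ + _ : Q →ₗ[B] Q) = _
      rw [LinearMap.comp_add]; rfl)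
    (fun c c' g => by
      show (GObj.lm M g) ∘ₗ (c'.unop * c.unop : Module.End B Q) = _
      rfl)
    (fun g => by
      show (GObj.lm M g) ∘ₗ (1 : Module.End B Q) = g
      exact LinearMap.comp_id _)

end FG

section Functors

variable (e : B ≃ₗ[B] (Fin n → Q))

/-- Componentwise application, as a map `FObj e N → FObj e N'`. -/
def Fapp {N N' : Type u} [AddCommGroup N] [Module (Module.End B Q)ᵐᵒᵖ N]
    [AddCommGroup N'] [Module (Module.End B Q)ᵐᵒᵖ N']
    (h : N →ₗ[(Module.End B Q)ᵐᵒᵖ] N') (v : FObj e N) : FObj e N' :=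
  fun i => h (v i)

/-- Componentwise application as a `B`-linear map. -/
def Fmap {N N' : Type u} [AddCommGroup N] [Module (Module.End B Q)ᵐᵒᵖ N]
    [AddCommGroup N'] [Module (Module.End B Q)ᵐᵒᵖ N']
    (h : N →ₗ[(Module.End B Q)ᵐᵒᵖ] N') : FObj e N →ₗ[B] FObj e N' where
  toFun := Fapp e h
  map_add' v w := funext fun i => h.map_add _ _
  map_smul' b v := by
    funext i
    show h ((b • v) i) = (b • Fapp e h v) i
    rw [fsmul_def, fsmul_def, map_sum]
    exact Finset.sum_congr rfl fun j _ => h.map_smul _ _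

/-- The functor `E-Mod ⥤ B-Mod`. -/
def F : ModuleCat.{u} (Module.End B Q)ᵐᵒᵖ ⥤ ModuleCat.{u} B where
  obj N := ModuleCat.of B (FObj e N)
  map {N N'} h := ModuleCat.ofHom (Fmap e h.hom)
  map_id N := rfl
  map_comp f g := rfl

/-- The functor `B-Mod ⥤ E-Mod`. -/
def G : ModuleCat.{u} B ⥤ ModuleCat.{u} (Module.End B Q)ᵐᵒᵖ where
  obj M := ModuleCat.of (Module.End B Q)ᵐᵒᵖ (GObj B Q M)
  map {M M'} h :=
    ModuleCat.ofHom
    { toFun := fun g => h.hom ∘ₗ (GObj.lm M g)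
      map_add' := fun g g' => LinearMap.comp_add _ _ _
      map_smul' := fun c g => rfl }
  map_id M := by
    refine ModuleCat.hom_ext (LinearMap.ext fun g => ?_)
    exact LinearMap.id_comp _
  map_comp f g := rfl

/-- `q ↦ inc e i q • m`, a `B`-linear map `Q → M`. -/
def incSmul (M : Type u) [AddCommGroup M] [Module B M] (i : Fin n) (m : M) :
    Q →ₗ[B] M where
  toFun q := inc e i q • m
  map_add' q q' := by
    show inc e i (q + q') • m = inc e i q • m + inc e i q' • m
    rw [map_add, add_smul]
  map_smul' b q := by
    show inc e i (b • q) • m = b • (inc e i q • m)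
    rw [map_smul, smul_eq_mul, mul_smul]

@[simp] lemma incSmul_apply (M : Type u) [AddCommGroup M] [Module B M]
    (i : Fin n) (m : M) (q : Q) : incSmul e M i m q = inc e i q • m := rfl

lemma incSmul_self (i : Fin n) : incSmul e Q i (pr e i 1) = 1 := by
  ext r
  show inc e i r • pr e i 1 = r
  rw [← map_smul, smul_eq_mul, mul_one, pr_inc]
  simp

/-- Counit: `F (G M) ≃ₗ[B] M`. -/
def counitEquiv (M : Type u) [AddCommGroup M] [Module B M] :
    FObj e (GObj B Q M) ≃ₗ[B] M where
  toFun v := ∑ i, GObj.lm M (v i) (pr e i 1)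
  invFun m := fun i => incSmul e M i m
  map_add' v w := by
    rw [← Finset.sum_add_distrib]
    exact Finset.sum_congr rfl fun i _ => LinearMap.add_apply _ _ _
  map_smul' b v := by
    show ∑ i, GObj.lm M ((b • v) i) (pr e i 1) = b • ∑ i, GObj.lm M (v i) (pr e i 1)
    rw [Finset.smul_sum]
    have h1 : ∀ i, GObj.lm M ((b • v) i) (pr e i 1)
        = ∑ j, GObj.lm M (v j) (pr e j (inc e i (pr e i 1) * b)) := by
      intro i
      rw [fsmul_def]
      rw [show GObj.lm M (∑ j, op (tau e b i j) • v j)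
          = ∑ j, GObj.lm M (op (tau e b i j) • v j) from rfl]
      rw [LinearMap.sum_apply]
      rfl
    rw [Finset.sum_congr rfl fun i _ => h1 i, Finset.sum_comm]
    refine Finset.sum_congr rfl fun j _ => ?_
    have h2 : ∑ i, GObj.lm M (v j) (pr e j (inc e i (pr e i 1) * b))
        = GObj.lm M (v j) (pr e j ((∑ i, inc e i (pr e i 1)) * b)) := by
      rw [Finset.sum_mul, map_sum, map_sum]
    rw [h2, sum_inc_pr, one_mul, ← map_smul, ← map_smul]
    congr 1
    rw [smul_eq_mul, mul_one]
  left_inv v := by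
    funext i
    refine LinearMap.ext fun q => ?_
    show inc e i q • ∑ j, GObj.lm M (v j) (pr e j 1) = GObj.lm M (v i) q
    rw [Finset.smul_sum]
    rw [Finset.sum_eq_single i]
    · rw [← map_smul, ← map_smul, smul_eq_mul, mul_one, pr_inc, if_pos rfl]
    · intro j _ hj
      rw [← map_smul, ← map_smul, smul_eq_mul, mul_one, pr_inc, if_neg hj, map_zero]
    · simp
  right_inv m := by
    show ∑ i, inc e i (pr e i 1) • m = m
    rw [← Finset.sum_smul, sum_inc_pr, one_smul]

lemma incSmul_mul (i : Fin n) (b : B) (q : Q) :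
    incSmul e Q i (b • q) = ∑ j, (incSmul e Q j q) * (tau e b i j) := by
  ext r
  have h : ∑ j, ((incSmul e Q j q) * (tau e b i j)) r
      = (∑ j, inc e j (pr e j (inc e i r * b))) • q := by
    rw [Finset.sum_smul]
    exact Finset.sum_congr rfl fun j _ => rfl
  simp only [LinearMap.sum_apply] at h ⊢
  rw [h, sum_inc_pr, incSmul_apply, ← mul_smul]

/-- The underlying function of the unit map. -/
def etaApp (N : Type u) [AddCommGroup N] [Module (Module.End B Q)ᵐᵒᵖ N] (x : N)
    (q : Q) : FObj e N :=
  fun i => op (incSmul e Q i q) • x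

/-- Unit map `N → G (F N)`. -/
def etaFun (N : Type u) [AddCommGroup N] [Module (Module.End B Q)ᵐᵒᵖ N] (x : N) :
    Q →ₗ[B] (FObj e N) where
  toFun := etaApp e N x
  map_add' q q' := by
    funext i
    show op (incSmul e Q i (q + q')) • x
      = op (incSmul e Q i q) • x + op (incSmul e Q i q') • x
    have h0 : incSmul e Q i (q + q') = incSmul e Q i q + incSmul e Q i q' := by
      ext r; simp [smul_add]
    rw [h0, MulOpposite.op_add, add_smul]
  map_smul' b q := by
    funext i
    show op (incSmul e Q i (b • q)) • x = (b • etaApp e N x q) i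
    rw [fsmul_def, incSmul_mul]
    have h1 : (op (∑ j, (incSmul e Q j q) * (tau e b i j)) : (Module.End B Q)ᵐᵒᵖ)
        = ∑ j, op ((incSmul e Q j q) * (tau e b i j)) :=
      map_sum (opAddEquiv (α := Module.End B Q)) _ _
    rw [h1]
    simp only [op_mul]
    rw [Finset.sum_smul]
    refine Finset.sum_congr rfl fun j _ => ?_
    show (op (tau e b i j) * op (incSmul e Q j q)) • x = op (tau e b i j) • (etaApp e N x q) j
    rw [mul_smul]
    rfl

/-- Unit: `N ≃ₗ[E] G (F N)`, given a choice of index `i0`. -/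
def unitEquiv (i0 : Fin n) (N : Type u) [AddCommGroup N] [Module (Module.End B Q)ᵐᵒᵖ N] :
    N ≃ₗ[(Module.End B Q)ᵐᵒᵖ] GObj B Q (FObj e N) where
  toFun x := etaFun e N x
  invFun g := GObj.lm _ g (pr e i0 1) i0
  map_add' x y := by
    refine LinearMap.ext fun q => ?_
    funext i
    show op (incSmul e Q i q) • (x + y) = _
    rw [smul_add]; rfl
  map_smul' c x := by
    refine LinearMap.ext fun q => ?_
    funext i
    show op (incSmul e Q i q) • (c • x) = op (incSmul e Q i (c.unop q)) • x
    rw [← mul_smul]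
    congr 1
    rw [← op_unop c, ← op_mul, op_unop]
    congr 1
    ext r
    show c.unop (inc e i r • q) = inc e i r • c.unop q
    exact map_smul c.unop _ _
  left_inv x := by
    show op (incSmul e Q i0 (pr e i0 1)) • x = x
    rw [incSmul_self, op_one, one_smul]
  right_inv g := by
    refine LinearMap.ext fun q => ?_
    funext i
    set v : FObj e N := GObj.lm _ g (pr e i0 1) with hv
    -- step A: g q = (inc e i0 q) • v
    have hA : GObj.lm _ g q = (inc e i0 q) • v := by
      rw [hv, ← map_smul]
      congr 1
      rw [← map_smul, smul_eq_mul, mul_one, pr_inc]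
      simp
    -- step B : v k = 0 for k ≠ i0
    have hB : ∀ k, k ≠ i0 → v k = 0 := by
      intro k hk
      have h0 : (inc e k (pr e k 1) : B) • v = 0 := by
        rw [hv, ← map_smul]
        have : inc e k (pr e k 1) • pr e i0 1 = 0 := by
          rw [← map_smul, smul_eq_mul, mul_one, pr_inc]
          simp [Ne.symm hk]
        rw [this, map_zero]
      have h1 : ((inc e k (pr e k 1) : B) • v) k = v k := by
        rw [fsmul_def, Finset.sum_eq_single k]
        · have : tau e (inc e k (pr e k 1)) k k = 1 := by
            ext r
            show pr e k (inc e k r * inc e k (pr e k 1)) = r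
            rw [show inc e k r * inc e k (pr e k 1) = inc e k r • inc e k (pr e k 1) from rfl,
              ← map_smul, ← map_smul, smul_eq_mul, mul_one, pr_inc]
            simp [pr_inc]
          rw [this, op_one, one_smul]
        · intro j _ hj
          have : tau e (inc e k (pr e k 1)) k j = 0 := by
            ext r
            show pr e j (inc e k r * inc e k (pr e k 1)) = 0
            rw [show inc e k r * inc e k (pr e k 1) = inc e k r • inc e k (pr e k 1) from rfl,
              ← map_smul, ← map_smul, smul_eq_mul, mul_one, pr_inc]
            simp [pr_inc, hj]
          rw [this, op_zero, zero_smul]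
        · simp
      rw [← h1, h0]
      rfl
    -- combine
    show op (incSmul e Q i q) • (v i0) = GObj.lm _ g q i
    rw [show GObj.lm _ g q i = ((inc e i0 q : B) • v) i from by rw [← hA]]
    rw [fsmul_def, Finset.sum_eq_single i0]
    · congr 2
      ext r
      show inc e i r • q = pr e i0 (inc e i r * inc e i0 q)
      rw [show inc e i r * inc e i0 q = inc e i r • inc e i0 q from rfl,
        ← map_smul, pr_inc]
      simp
    · intro j _ hj
      rw [hB j hj, smul_zero]
    · simp

end Functors

end SkryabinAux

open SkryabinAux MulOpposite in
/-- Modular Skryabin equivalence, abstract form: if `B`, as a left module over itself,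
is isomorphic to a direct sum of `n > 0` copies of a `B`-module `Q`, then `B` is Morita
equivalent to `E = End_B(Q)ᵒᵖ`: the categories of left `E`-modules and of left
`B`-modules are equivalent. -/
theorem morita_equivalence_of_free_decomposition (B Q : Type u) [Ring B]
    [AddCommGroup Q] [Module B Q] (n : ℕ) (hn : 0 < n)
    (e : B ≃ₗ[B] (Fin n → Q)) :
    Nonempty (ModuleCat.{u} (Module.End B Q)ᵐᵒᵖ ≌ ModuleCat.{u} B) := by
  refine ⟨CategoryTheory.Equivalence.mk (F e) (G) ?_ ?_⟩
  · exact NatIso.ofComponents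
      (fun N => (unitEquiv e ⟨0, hn⟩ N).toModuleIso)
      (fun {N N'} h => by
        refine ModuleCat.hom_ext (LinearMap.ext fun x => ?_)
        refine LinearMap.ext fun q => ?_
        funext i
        show op (incSmul e Q i q) • (h.hom x) = h.hom (op (incSmul e Q i q) • x)
        exact (map_smul h.hom _ _).symm)
  · exact NatIso.ofComponents
      (fun M => (counitEquiv e M).toModuleIso)
      (fun {M M'} h => by
        refine ModuleCat.hom_ext (LinearMap.ext fun v => ?_)
        show ∑ i, GObj.lm M' (h.hom ∘ₗ GObj.lm M (v i)) (pr e i 1)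
            = h.hom (∑ i, GObj.lm M (v i) (pr e i 1))
        rw [map_sum]
        rfl)
end

section
/- Let B be a ring, n a positive natural number, and Q a left B-module such that B, viewed as a left module over itself, is isomorphic to the direct sum of n copies of Q. Let E := End_B(Q)^op, so that Q is a right E-module via q · f := f(q) for f ∈ End_B(Q). Then Q is a free right E-module of rank n, i.e. Q is isomorphic as a right E-module to the direct sum of n copies of E. -/
/-- If `B`, as a left module over itself, is isomorphic to a direct sum of `n > 0`
copies of a `B`-module `Q`, then `Q` is a free right module of rank `n` over
`E = End_B(Q)ᵒᵖ` (the right `E`-action being `q · f := f q`).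

A right `E`-module is the same thing as a left `Eᵐᵒᵖ = End_B(Q)`-module; under this
identification the right `E`-action `q · f = f q` on `Q` is the tautological left
action of `End_B(Q)` on `Q` (`Module.End.applyModule`), and the right regular
`E`-module `E` is the left regular `End_B(Q)`-module. So the statement reads:
`Q ≅ (End_B(Q))^n` as left `End_B(Q)`-modules. -/
theorem free_of_rank_n_over_endomorphism_ring (B : Type*) [Ring B]
    (Q : Type*) [AddCommGroup Q] [Module B Q] (n : ℕ) (hn : 0 < n)
    (e : B ≃ₗ[B] (Fin n → Q)) :
    Nonempty (Q ≃ₗ[Module.End B Q] (Fin n → Module.End B Q)) := by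
  exact ⟨(LinearMap.ringLmapEquivSelf B (Module.End B Q) Q).symm ≪≫ₗ
    LinearEquiv.congrLeft Q (Module.End B Q) e ≪≫ₗ
    (LinearMap.lsum B (fun _ : Fin n => Q) (Module.End B Q)).symm⟩
end
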